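/- For fixed χ > 1, the function λ ↦ ν₀(χ,λ) = (χ + χ^λ − 2χ^{1+λ})/(χ − χ^{1+λ}) is strictly decreasing on (0,1]. -/

import Mathlib

open Real Set

/-- For fixed χ > 1, λ ↦ ν₀(χ,λ) = (χ + χ^λ − 2χ^{1+λ})/(χ − χ^{1+λ}) is strictly
    decreasing on (0,1]. -/
theorem nuZero_strictAnti (χ : ℝ) (hχ : 1 < χ) :
    StrictAntiOn (fun lam : ℝ =>
      (χ + χ ^ lam - 2 * χ ^ (1 + lam)) / (χ - χ ^ (1 + lam))) (Ioc 0 1) := by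
  have hχ0 : (0:ℝ) < χ := lt_trans one_pos hχ
  have key : ∀ l : ℝ, 0 < l →
      (χ + χ ^ l - 2 * χ ^ (1 + l)) / (χ - χ ^ (1 + l))
        = 1 + (1 - 1/χ) * (1 + 1/(χ ^ l - 1)) := by
    intro l hl
    have ht : 1 < χ ^ l := Real.one_lt_rpow_iff_of_pos hχ0 |>.2 (Or.inl ⟨hχ, hl⟩)
    have hsplit : χ ^ (1 + l) = χ * χ ^ l := by
      rw [Real.rpow_add hχ0, Real.rpow_one]
    have h1 : χ ^ l - 1 ≠ 0 := by linarith
    have h2 : χ ≠ 0 := ne_of_gt hχ0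
    have h3 : χ - χ * χ ^ l ≠ 0 := by nlinarith
    rw [hsplit]
    have h4 : 1 - χ ^ l ≠ 0 := sub_ne_zero.mpr (ne_of_lt ht)
    field_simp
    ring
  intro a ha b hb hab
  simp only
  rw [key a ha.1, key b hb.1]
  have hta : 1 < χ ^ a := Real.one_lt_rpow_iff_of_pos hχ0 |>.2 (Or.inl ⟨hχ, ha.1⟩)
  have hlt : χ ^ a < χ ^ b := Real.rpow_lt_rpow_left_iff hχ |>.2 hab
  have hinv : 1/(χ ^ b - 1) < 1/(χ ^ a - 1) :=
    one_div_lt_one_div_of_lt (by linarith) (by linarith)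
  have hc : 0 < 1 - 1/χ := by
    have : 1/χ < 1 := by rw [div_lt_one hχ0]; linarith
    linarith
  nlinarith
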